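/- arXiv:1107.3797 — 5 statements merged into one kernel-verified Lean document; each statement's English description precedes it below -/
import Mathlib

section
/- Let g(w) = (1/2)·w²·e^{-w}·1{w>0} with derivative ġ(w) = (w − w²/2)e^{-w} on (0,∞), and let h_θ(y) = (1/2)·g(y−θ) + (1/2)·g(θ−y) for θ, y ∈ ℝ. Then for every θ, the Fisher information of the family {h_θ} equals that of the family {g(·−θ)}: ∫_{{y : h_θ(y) > 0}} ḣ_θ(y)²/h_θ(y) dy = ∫_{0}^{∞} ġ(w)²/g(w) dw = 1, where ḣ_θ(y) denotes the derivative of h_θ(y) in y (equivalently, its negative derivative in θ). -/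
open MeasureTheory Real Set

/-- The density `g(w) = (1/2) w² e^{-w} 1{w>0}`. -/
noncomputable def g (w : ℝ) : ℝ := if 0 < w then (1/2) * w^2 * Real.exp (-w) else 0

/-- The derivative `ġ(w) = (w − w²/2) e^{-w}` of `g` on `(0,∞)`. -/
noncomputable def gdot (w : ℝ) : ℝ := (w - w^2/2) * Real.exp (-w)

/-- The density `h_θ(y) = (1/2) g(y−θ) + (1/2) g(θ−y)`. -/
noncomputable def h (θ : ℝ) (y : ℝ) : ℝ := (1/2) * g (y - θ) + (1/2) * g (θ - y)

lemma g_eq {w : ℝ} (hw : 0 < w) : g w = (1/2) * w^2 * Real.exp (-w) := if_pos hw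

lemma g_pos {w : ℝ} (hw : 0 < w) : 0 < g w := by
  rw [g_eq hw]; positivity

lemma g_of_nonpos {w : ℝ} (hw : ¬ 0 < w) : g w = 0 := if_neg hw

lemma g_nonneg (w : ℝ) : 0 ≤ g w := by
  rw [g]; split
  · positivity
  · exact le_refl 0

lemma integrable_pow_exp (n : ℕ) :
    IntegrableOn (fun x : ℝ => x ^ n * Real.exp (-x)) (Ioi 0) := by
  have h1 : (0:ℝ) < (n:ℝ) + 1 := by positivity
  refine (Real.GammaIntegral_convergent h1).congr_fun ?_ measurableSet_Ioi
  intro x hx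
  simp only
  rw [show ((n:ℝ) + 1 - 1) = (n:ℝ) by ring, Real.rpow_natCast]
  ring

lemma integral_pow_exp (n : ℕ) :
    ∫ x in Ioi (0:ℝ), x ^ n * Real.exp (-x) = (n.factorial : ℝ) := by
  have h1 : (0:ℝ) < (n:ℝ) + 1 := by positivity
  have h2 := Real.Gamma_eq_integral h1
  rw [show ((n:ℝ) + 1) = (n:ℕ) + 1 by push_cast; ring, Real.Gamma_nat_eq_factorial] at h2
  rw [h2]
  refine setIntegral_congr_fun measurableSet_Ioi fun x hx => ?_
  rw [show ((n:ℝ) + 1 - 1) = (n:ℝ) by ring, Real.rpow_natCast]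
  ring

lemma fisher_eq (w : ℝ) (hw : 0 < w) :
    (gdot w)^2 / g w
      = 2 * (w ^ 0 * Real.exp (-w)) - 2 * (w ^ 1 * Real.exp (-w))
        + (1/2) * (w ^ 2 * Real.exp (-w)) := by
  have he : Real.exp (-w) ≠ 0 := (Real.exp_pos _).ne'
  rw [gdot, g_eq hw]
  field_simp
  ring

lemma integrable_aux : IntegrableOn (fun w : ℝ =>
    2 * (w ^ 0 * Real.exp (-w)) - 2 * (w ^ 1 * Real.exp (-w))
      + (1/2) * (w ^ 2 * Real.exp (-w))) (Ioi (0:ℝ)) :=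
  (((integrable_pow_exp 0).const_mul 2).sub
    ((integrable_pow_exp 1).const_mul 2)).add
    ((integrable_pow_exp 2).const_mul (1/2))

lemma integrable_fisher : IntegrableOn (fun w => (gdot w)^2 / g w) (Ioi (0:ℝ)) :=
  MeasureTheory.IntegrableOn.congr_fun integrable_aux
    (fun x hx => (fisher_eq x hx).symm) measurableSet_Ioi

lemma integral_fisher : ∫ w in Ioi (0:ℝ), (gdot w)^2 / g w = 1 := by
  rw [setIntegral_congr_fun measurableSet_Ioi (fun w hw => fisher_eq w hw)]
  have i0 : IntegrableOn (fun w : ℝ => 2 * (w ^ 0 * Real.exp (-w))) (Ioi (0:ℝ)) :=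
    (integrable_pow_exp 0).const_mul 2
  have i1 : IntegrableOn (fun w : ℝ => 2 * (w ^ 1 * Real.exp (-w))) (Ioi (0:ℝ)) :=
    (integrable_pow_exp 1).const_mul 2
  have i2 : IntegrableOn (fun w : ℝ => (1/2) * (w ^ 2 * Real.exp (-w))) (Ioi (0:ℝ)) :=
    (integrable_pow_exp 2).const_mul (1/2)
  have i01 : IntegrableOn (fun w : ℝ =>
      2 * (w ^ 0 * Real.exp (-w)) - 2 * (w ^ 1 * Real.exp (-w))) (Ioi (0:ℝ)) := i0.sub i1
  rw [integral_add i01 i2, integral_sub i0 i1,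
    integral_const_mul, integral_const_mul, integral_const_mul,
    integral_pow_exp 0, integral_pow_exp 1, integral_pow_exp 2]
  norm_num

lemma hasDerivAt_h_gt {θ y : ℝ} (hy : θ < y) :
    HasDerivAt (fun z => h θ z) ((1/2) * gdot (y - θ)) y := by
  have hp : HasDerivAt (fun z : ℝ => (1/4) * (z - θ)^2) ((1/2) * (y - θ)) y := by
    have := (((hasDerivAt_id y).sub_const θ).pow 2).const_mul (1/4 : ℝ)
    refine this.congr_deriv ?_
    simp; ring
  have he : HasDerivAt (fun z : ℝ => Real.exp (θ - z)) (-Real.exp (θ - y)) y := by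
    have := ((hasDerivAt_id y).const_sub θ).exp
    simpa using this
  have hmul := hp.mul he
  have hev : (fun z => h θ z) =ᶠ[nhds y] (fun z : ℝ => (1/4) * (z - θ)^2 * Real.exp (θ - z)) := by
    filter_upwards [Ioi_mem_nhds hy] with z hz
    have h1 : 0 < z - θ := sub_pos.mpr hz
    have h2 : ¬ 0 < θ - z := by simp only [mem_Ioi] at hz; linarith
    rw [h, g_eq h1, g_of_nonpos h2, show (-(z - θ)) = θ - z by ring]
    ring
  refine (hmul.congr_of_eventuallyEq hev).congr_deriv ?_
  rw [gdot, show (-(y - θ)) = θ - y by ring]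
  ring

lemma hasDerivAt_h_lt {θ y : ℝ} (hy : y < θ) :
    HasDerivAt (fun z => h θ z) (-((1/2) * gdot (θ - y))) y := by
  have hp : HasDerivAt (fun z : ℝ => (1/4) * (θ - z)^2) (-((1/2) * (θ - y))) y := by
    have := (((hasDerivAt_id y).const_sub θ).pow 2).const_mul (1/4 : ℝ)
    refine this.congr_deriv ?_
    simp; ring
  have he : HasDerivAt (fun z : ℝ => Real.exp (z - θ)) (Real.exp (y - θ)) y := by
    have := ((hasDerivAt_id y).sub_const θ).exp
    simpa using this
  have hmul := hp.mul he
  have hev : (fun z => h θ z) =ᶠ[nhds y] (fun z : ℝ => (1/4) * (θ - z)^2 * Real.exp (z - θ)) := by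
    filter_upwards [Iio_mem_nhds hy] with z hz
    have h1 : 0 < θ - z := sub_pos.mpr hz
    have h2 : ¬ 0 < z - θ := by simp only [mem_Iio] at hz; linarith
    rw [h, g_eq h1, g_of_nonpos h2, show (-(θ - z)) = z - θ by ring]
    ring
  refine (hmul.congr_of_eventuallyEq hev).congr_deriv ?_
  rw [gdot, show (-(θ - y)) = y - θ by ring]
  ring

lemma shift_Ioi (F : ℝ → ℝ) (θ : ℝ) :
    ∫ y in Ioi θ, F (y - θ) = ∫ w in Ioi (0:ℝ), F w := by
  have A : MeasurePreserving (fun x : ℝ => x + θ) volume volume :=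
    measurePreserving_add_right volume θ
  have B : MeasurableEmbedding (fun x : ℝ => x + θ) :=
    (MeasurableEquiv.addRight θ).measurableEmbedding
  have key := A.setIntegral_preimage_emb B (fun y => F (y - θ)) (Ioi θ)
  rw [← key]
  have hs : (fun x : ℝ => x + θ) ⁻¹' (Ioi θ) = Ioi 0 := by
    ext x; simp [mem_Ioi]
  rw [hs]
  simp

lemma shift_Iio (F : ℝ → ℝ) (θ : ℝ) :
    ∫ y in Iio θ, F (θ - y) = ∫ w in Ioi (0:ℝ), F w := by
  have A : MeasurePreserving (fun x : ℝ => θ - x) volume volume :=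
    Measure.measurePreserving_sub_left volume θ
  have B : MeasurableEmbedding (fun x : ℝ => θ - x) :=
    (MeasurableEquiv.subLeft θ).measurableEmbedding
  have key := A.setIntegral_preimage_emb B (fun y => F (θ - y)) (Iio θ)
  rw [← key]
  have hs : (fun x : ℝ => θ - x) ⁻¹' (Iio θ) = Ioi 0 := by
    ext x; simp [mem_Ioi, mem_Iio]
  rw [hs]
  simp

lemma intOn_Ioi (F : ℝ → ℝ) (θ : ℝ) (hF : IntegrableOn F (Ioi 0)) :
    IntegrableOn (fun y => F (y - θ)) (Ioi θ) := by
  have A : MeasurePreserving (fun x : ℝ => x + θ) volume volume :=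
    measurePreserving_add_right volume θ
  have B : MeasurableEmbedding (fun x : ℝ => x + θ) :=
    (MeasurableEquiv.addRight θ).measurableEmbedding
  refine (A.integrableOn_comp_preimage B (f := fun y : ℝ => F (y - θ)) (s := Ioi θ)).mp ?_
  have hs : (fun x : ℝ => x + θ) ⁻¹' (Ioi θ) = Ioi 0 := by
    ext x; simp [mem_Ioi]
  rw [hs]
  exact MeasureTheory.IntegrableOn.congr_fun hF (fun x hx => by simp) measurableSet_Ioi

lemma intOn_Iio (F : ℝ → ℝ) (θ : ℝ) (hF : IntegrableOn F (Ioi 0)) :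
    IntegrableOn (fun y => F (θ - y)) (Iio θ) := by
  have A : MeasurePreserving (fun x : ℝ => θ - x) volume volume :=
    Measure.measurePreserving_sub_left volume θ
  have B : MeasurableEmbedding (fun x : ℝ => θ - x) :=
    (MeasurableEquiv.subLeft θ).measurableEmbedding
  refine (A.integrableOn_comp_preimage B (f := fun y : ℝ => F (θ - y)) (s := Iio θ)).mp ?_
  have hs : (fun x : ℝ => θ - x) ⁻¹' (Iio θ) = Ioi 0 := by
    ext x; simp [mem_Ioi, mem_Iio]
  rw [hs]
  exact MeasureTheory.IntegrableOn.congr_fun hF (fun x hx => by simp) measurableSet_Ioi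

/-- for every `θ`, the Fisher information of the family `{h_θ}` equals that
of the family `{g(·−θ)}`:
`∫_{h_θ > 0} ḣ_θ(y)²/h_θ(y) dy = ∫_0^∞ ġ(w)²/g(w) dw = 1`,
where `ḣ_θ` is the derivative of `h_θ(y)` in `y`. -/
theorem stmt4 (θ : ℝ) (hdot : ℝ → ℝ)
    (hderiv : ∀ y : ℝ, y ≠ θ → HasDerivAt (fun y => h θ y) (hdot y) y) :
    (∫ y in {y : ℝ | 0 < h θ y}, (hdot y)^2 / h θ y
      = ∫ w in Ioi (0:ℝ), (gdot w)^2 / g w) ∧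
    (∫ w in Ioi (0:ℝ), (gdot w)^2 / g w = 1) := by
  refine ⟨?_, integral_fisher⟩
  set F : ℝ → ℝ := fun w => (gdot w)^2 / g w with hF
  -- the support set
  have hset : {y : ℝ | 0 < h θ y} = Iio θ ∪ Ioi θ := by
    ext y
    simp only [mem_setOf_eq, mem_union, mem_Iio, mem_Ioi]
    constructor
    · intro hp
      rcases lt_trichotomy y θ with h' | h' | h'
      · exact Or.inl h'
      · exfalso
        rw [h, h', sub_self, g_of_nonpos (lt_irrefl 0)] at hp
        simp at hp
      · exact Or.inr h'
    · rintro (h' | h')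
      · have h1 : 0 < g (θ - y) := g_pos (sub_pos.mpr h')
        have h2 : 0 ≤ g (y - θ) := g_nonneg _
        rw [h]; linarith
      · have h1 : 0 < g (y - θ) := g_pos (sub_pos.mpr h')
        have h2 : 0 ≤ g (θ - y) := g_nonneg _
        rw [h]; linarith
  -- values of the integrand on each side
  have heq1 : ∀ y ∈ Ioi θ, (hdot y)^2 / h θ y = (1/2) * F (y - θ) := by
    intro y hy
    rw [mem_Ioi] at hy
    have hu := (hderiv y (hy.ne')).unique (hasDerivAt_h_gt hy)
    have h1 : 0 < y - θ := sub_pos.mpr hy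
    have h2 : ¬ 0 < θ - y := by linarith
    rw [hu, h, g_of_nonpos h2, hF]
    have h3 : g (y - θ) ≠ 0 := (g_pos h1).ne'
    field_simp
    rw [add_zero, mul_div_assoc, div_self h3]
    ring
  have heq2 : ∀ y ∈ Iio θ, (hdot y)^2 / h θ y = (1/2) * F (θ - y) := by
    intro y hy
    rw [mem_Iio] at hy
    have hu := (hderiv y (ne_of_lt hy)).unique (hasDerivAt_h_lt hy)
    have h1 : 0 < θ - y := sub_pos.mpr hy
    have h2 : ¬ 0 < y - θ := by linarith
    rw [hu, h, g_of_nonpos h2, hF]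
    have h3 : g (θ - y) ≠ 0 := (g_pos h1).ne'
    field_simp
    rw [zero_add, mul_div_assoc, div_self h3]
    ring
  have hc1 : IntegrableOn (fun y : ℝ => (1/2) * F (θ - y)) (Iio θ) :=
    (intOn_Iio F θ integrable_fisher).const_mul (1/2)
  have hc2 : IntegrableOn (fun y : ℝ => (1/2) * F (y - θ)) (Ioi θ) :=
    (intOn_Ioi F θ integrable_fisher).const_mul (1/2)
  have hInt1 : IntegrableOn (fun y => (hdot y)^2 / h θ y) (Iio θ) :=
    MeasureTheory.IntegrableOn.congr_fun hc1 (fun y hy => (heq2 y hy).symm) measurableSet_Iio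
  have hInt2 : IntegrableOn (fun y => (hdot y)^2 / h θ y) (Ioi θ) :=
    MeasureTheory.IntegrableOn.congr_fun hc2 (fun y hy => (heq1 y hy).symm) measurableSet_Ioi
  have hdisj : Disjoint (Iio θ) (Ioi θ) :=
    (Iio_disjoint_Ici le_rfl).mono_right Ioi_subset_Ici_self
  rw [hset, setIntegral_union hdisj measurableSet_Ioi hInt1 hInt2,
    setIntegral_congr_fun measurableSet_Iio heq2,
    setIntegral_congr_fun measurableSet_Ioi heq1,
    integral_const_mul, integral_const_mul, shift_Iio, shift_Ioi]
  ring
end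

section
/- Let g(w) = (1/2)·w²·e^{-w}·1{w>0} and h_θ(y) = (1/2)·g(y−θ) + (1/2)·g(θ−y), so h_θ(y) > 0 for every y ≠ θ. Then there exists no measurable function π : ℝ → ℝ such that for every θ ∈ ℝ, π(y) = 1{y > θ} for Lebesgue-almost every y ∈ ℝ. Consequently, the statistic S(y,z) = y is not sufficient for the family {P_θ : θ ∈ ℝ}, where P_θ is the probability measure on ℝ×{−1,+1} with density f_θ(y,z) = g(y−θ)·1{z=+1} + g(θ−y)·1{z=−1} with respect to 𝔪 ⊗ ν (𝔪 Lebesgue, ν uniform on {−1,+1}): sufficiency would require a single measurable π with P_θ(z = +1 ∣ S = y) = π(y) a.e.[Q_θ] for every θ, but P_θ(z = +1 ∣ S = y) = 1{y > θ}, and Q_θ = S P_θ is mutually absolutely continuous with Lebesgue measure off the single point θ. -/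
open MeasureTheory Real Set

/-- The uniform probability measure `ν` on `{−1,+1}` (mass `1/2` at each point). -/
noncomputable def ν : Measure Bool :=
  (1/2 : ENNReal) • Measure.dirac true + (1/2 : ENNReal) • Measure.dirac false

instance : IsProbabilityMeasure ν := by
  constructor
  simp [ν]
  rw [ENNReal.inv_two_add_inv_two]

/-- The dominating measure `λ = 𝔪 ⊗ ν` on `ℝ × {−1,+1}`. -/
noncomputable def lam : Measure (ℝ × Bool) := (volume : Measure ℝ).prod ν

/-- The density `f_θ(y,z) = g(y−θ) 1{z=+1} + g(θ−y) 1{z=−1}`. -/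
noncomputable def f (θ : ℝ) (x : ℝ × Bool) : ℝ :=
  if x.2 then g (x.1 - θ) else g (θ - x.1)

/-- The probability measure `P_θ` with density `f_θ` with respect to `λ`. -/
noncomputable def P (θ : ℝ) : Measure (ℝ × Bool) :=
  lam.withDensity fun x => ENNReal.ofReal (f θ x)

/-- `h_θ(y) > 0` for every `y ≠ θ`, and there exists no measurable
`π : ℝ → ℝ` such that for every `θ ∈ ℝ`, `π(y) = 1{y > θ}` for Lebesgue-almost every
`y`.  Consequently the statistic `S(y,z) = y` is not sufficient for `{P_θ : θ ∈ ℝ}`: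
sufficiency would require such a single `π` with `P_θ(z = +1 ∣ S = y) = π(y)`
a.e. `[Q_θ]` for every `θ`, but `P_θ(z = +1 ∣ S = y) = 1{y > θ}` and `Q_θ` is mutually
absolutely continuous with Lebesgue measure off the single point `θ`. -/
theorem stmt6 :
    (∀ θ y : ℝ, y ≠ θ → 0 < h θ y) ∧
    ¬ ∃ piFn : ℝ → ℝ, Measurable piFn ∧
        ∀ θ : ℝ, ∀ᵐ y ∂(volume : Measure ℝ), piFn y = if θ < y then 1 else 0 := by

  constructor
  · intro θ y hy
    unfold h g
    rcases lt_or_gt_of_ne hy with hlt | hgt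
    · have h1 : 0 < θ - y := by linarith
      have h2 : ¬ 0 < y - θ := by linarith
      rw [if_neg h2, if_pos h1]
      positivity
    · have h1 : 0 < y - θ := by linarith
      have h2 : ¬ 0 < θ - y := by linarith
      rw [if_pos h1, if_neg h2]
      positivity
  · rintro ⟨piFn, _, hpi⟩
    have h0 := hpi 0
    have h1 := hpi 1
    have hae : ∀ᵐ y ∂(volume : Measure ℝ), ¬ y ∈ Ioo (0:ℝ) 1 := by
      filter_upwards [h0, h1] with y hy0 hy1 hmem
      obtain ⟨ha, hb⟩ := hmem
      rw [if_pos ha] at hy0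
      rw [if_neg (by linarith)] at hy1
      rw [hy0] at hy1
      norm_num at hy1
    have hz : (volume : Measure ℝ) {a : ℝ | 0 < a ∧ a < 1} = 0 := by
      simpa [ae_iff] using hae
    have : (volume : Measure ℝ) (Ioo (0:ℝ) 1) = 0 := hz
    simp [Real.volume_Ioo] at this
end

section
/- Let g(w) = (1/2)·w²·e^{-w}·1{w>0} with derivative ġ(w) = (w − w²/2)e^{-w} on (0,∞), and let P_θ be the probability measure on ℝ×{−1,+1} with density f_θ(y,z) = g(y−θ)·1{z=+1} + g(θ−y)·1{z=−1} with respect to λ = 𝔪 ⊗ ν. For x = (y,z) define Δ_θ(x) = −ġ(y−θ)/g(y−θ) if y > θ, Δ_θ(x) = ġ(θ−y)/g(θ−y) if y < θ, and Δ_θ(x) = 0 if y = θ. Then: (a) Δ_θ is square integrable with ∫ Δ_θ² dP_θ = ∫_0^∞ ġ(w)²/g(w) dw = 1; and (b) the family {P_θ} is differentiable in quadratic mean at every θ with score Δ_θ: writing p_{t,θ}(x) = (f_{θ+t}(x)/f_θ(x))·1{f_θ(x) > 0} for the density of the P_θ-absolutely-continuous part of P_{θ+t}, one has ∫ ( √(p_{t,θ}(x))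 − 1 − (t/2)·Δ_θ(x) )² dP_θ(x) = o(t²) as t → 0, and the P_θ-singular part of P_{θ+t} has mass o(t²). -/
open MeasureTheory Real Set Filter Asymptotics Topology
open scoped ENNReal NNReal

noncomputable def Δ (θ : ℝ) (x : ℝ × Bool) : ℝ :=
  if θ < x.1 then -gdot (x.1 - θ) / g (x.1 - θ)
  else if x.1 < θ then gdot (θ - x.1) / g (θ - x.1)
  else 0

noncomputable def p (t θ : ℝ) (x : ℝ × Bool) : ℝ :=
  if 0 < f θ x then f (θ + t) x / f θ x else 0

namespace Stmt8

lemma g_of_pos {w : ℝ} (hw : 0 < w) : g w = 1/2 * w^2 * Real.exp (-w) := if_pos hw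

lemma g_of_nonpos {w : ℝ} (hw : ¬ 0 < w) : g w = 0 := if_neg hw

lemma g_nonneg (w : ℝ) : 0 ≤ g w := by
  unfold g; split
  · positivity
  · exact le_refl 0

lemma g_pos {w : ℝ} (hw : 0 < w) : 0 < g w := by
  rw [g_of_pos hw]; positivity

@[fun_prop]
lemma measurable_g : Measurable g := by
  unfold g
  exact Measurable.ite (measurableSet_lt measurable_const measurable_id) (by fun_prop)
    measurable_const

@[fun_prop]
lemma measurable_gdot : Measurable gdot := by unfold gdot; fun_prop

@[fun_prop]
lemma measurable_f (θ : ℝ) : Measurable (f θ) := by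
  unfold f
  apply Measurable.ite
  · exact (measurable_snd (MeasurableSet.singleton true) : MeasurableSet {x : ℝ × Bool | x.2 = true})
  · exact measurable_g.comp (measurable_fst.sub measurable_const)
  · exact measurable_g.comp (measurable_const.sub measurable_fst)

@[fun_prop]
lemma measurable_Δ (θ : ℝ) : Measurable (Δ θ) := by
  unfold Δ
  apply Measurable.ite
  · exact measurableSet_lt measurable_const measurable_fst
  · exact ((measurable_gdot.comp (measurable_fst.sub measurable_const)).neg).div
      (measurable_g.comp (measurable_fst.sub measurable_const))
  · apply Measurable.ite
    · exact measurableSet_lt measurable_fst measurable_const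
    · exact (measurable_gdot.comp (measurable_const.sub measurable_fst)).div
        (measurable_g.comp (measurable_const.sub measurable_fst))
    · exact measurable_const

@[fun_prop]
lemma measurable_p (t θ : ℝ) : Measurable (p t θ) := by
  unfold p
  apply Measurable.ite
  · exact measurableSet_lt measurable_const (measurable_f θ)
  · exact (measurable_f (θ + t)).div (measurable_f θ)
  · exact measurable_const

lemma lintegral_bool (H : Bool → ℝ≥0∞) : ∫⁻ z, H z ∂ν = 1/2 * H true + 1/2 * H false := by
  simp [ν, lintegral_add_measure, lintegral_smul_measure, lintegral_dirac]

lemma lintegral_comp_neg (H : ℝ → ℝ≥0∞) : ∫⁻ y, H (-y) = ∫⁻ y, H y := by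
  conv_rhs => rw [← Measure.map_neg_eq_self (volume : Measure ℝ)]
  rw [show (Neg.neg : ℝ → ℝ) = (MeasurableEquiv.neg ℝ) from rfl,
    lintegral_map_equiv H (MeasurableEquiv.neg ℝ)]

lemma lintegral_P (θ : ℝ) (F : ℝ × Bool → ℝ≥0∞) (hF : Measurable F) :
    ∫⁻ x, F x ∂(P θ) =
      1/2 * (∫⁻ w, F (θ + w, true) * ENNReal.ofReal (g w))
      + 1/2 * (∫⁻ w, F (θ - w, false) * ENNReal.ofReal (g w)) := by
  have hd : Measurable fun x : ℝ × Bool => ENNReal.ofReal (f θ x) :=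
    (measurable_f θ).ennreal_ofReal
  rw [P, lintegral_withDensity_eq_lintegral_mul lam hd hF]
  simp only [Pi.mul_apply]
  have hG : Measurable fun x : ℝ × Bool => ENNReal.ofReal (f θ x) * F x := hd.mul hF
  rw [lam, lintegral_prod _ hG.aemeasurable]
  have hbool : ∀ y : ℝ, (∫⁻ z, ENNReal.ofReal (f θ (y, z)) * F (y, z) ∂ν)
      = 1/2 * (ENNReal.ofReal (g (y - θ)) * F (y, true))
        + 1/2 * (ENNReal.ofReal (g (θ - y)) * F (y, false)) := by
    intro y
    rw [lintegral_bool (fun z => ENNReal.ofReal (f θ (y, z)) * F (y, z))]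
    simp [f]
  simp_rw [hbool]
  rw [lintegral_add_left (by fun_prop : Measurable fun y : ℝ =>
      1/2 * (ENNReal.ofReal (g (y - θ)) * F (y, true)))]
  rw [lintegral_const_mul _ (by fun_prop : Measurable fun y : ℝ =>
      ENNReal.ofReal (g (y - θ)) * F (y, true))]
  rw [lintegral_const_mul _ (by fun_prop : Measurable fun y : ℝ =>
      ENNReal.ofReal (g (θ - y)) * F (y, false))]
  have h1 : ∫⁻ y : ℝ, ENNReal.ofReal (g (y - θ)) * F (y, true)
      = ∫⁻ w, F (θ + w, true) * ENNReal.ofReal (g w) := by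
    have heq : (fun y : ℝ => ENNReal.ofReal (g (y - θ)) * F (y, true))
        = fun y => (fun w => F (θ + w, true) * ENNReal.ofReal (g w)) (y - θ) := by
      funext y; simp [add_sub_cancel, mul_comm]
    rw [heq, lintegral_sub_right_eq_self (fun w => F (θ + w, true) * ENNReal.ofReal (g w)) θ]
  have h2 : ∫⁻ y : ℝ, ENNReal.ofReal (g (θ - y)) * F (y, false)
      = ∫⁻ w, F (θ - w, false) * ENNReal.ofReal (g w) := by
    have heq : (fun y : ℝ => ENNReal.ofReal (g (θ - y)) * F (y, false))
        = fun y => (fun w => F (θ - w, false) * ENNReal.ofReal (g w)) (-(y - θ)) := by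
      funext y; simp [sub_sub_cancel, mul_comm, neg_sub]
    rw [heq,
      lintegral_sub_right_eq_self (fun v => (fun w => F (θ - w, false) * ENNReal.ofReal (g w)) (-v)) θ]
    exact lintegral_comp_neg (fun w => F (θ - w, false) * ENNReal.ofReal (g w))
  rw [h1, h2]

lemma integrableOn_monomial_exp (n : ℕ) :
    IntegrableOn (fun w : ℝ => w^n * Real.exp (-w)) (Ioi 0) := by
  have h := Real.GammaIntegral_convergent (s := (n : ℝ) + 1) (by positivity)
  refine h.congr_fun (fun x hx => ?_) measurableSet_Ioi
  show Real.exp (-x) * x ^ (((n:ℝ) + 1) - 1) = x^n * Real.exp (-x)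
  rw [show ((n : ℝ) + 1) - 1 = (n : ℝ) by ring, Real.rpow_natCast]
  ring

lemma integral_monomial_exp (n : ℕ) :
    (∫ w in Ioi (0:ℝ), w^n * Real.exp (-w)) = (n.factorial : ℝ) := by
  have h1 : ((n : ℝ) + 1) > 0 := by positivity
  have := Real.Gamma_eq_integral h1
  rw [show ((n:ℝ) + 1) = ((n:ℕ) + 1 : ℝ) by push_cast; ring] at this
  rw [Real.Gamma_nat_eq_factorial n] at this
  rw [this]
  refine setIntegral_congr_fun measurableSet_Ioi (fun x hx => ?_)
  show x^n * Real.exp (-x) = Real.exp (-x) * x ^ (((n:ℝ) + 1) - 1)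
  rw [show (((n:ℝ) + 1)) - 1 = (n : ℝ) by ring, Real.rpow_natCast]
  ring

lemma integrableOn_combo (a b c : ℝ) :
    IntegrableOn (fun w : ℝ => (a + b*w + c*w^2) * Real.exp (-w)) (Ioi 0) := by
  have heq : (fun w : ℝ => (a + b*w + c*w^2) * Real.exp (-w))
      = fun w : ℝ => a*(w^0*Real.exp (-w)) + b*(w^1*Real.exp (-w)) + c*(w^2*Real.exp (-w)) := by
    funext w; ring
  rw [heq]
  exact (((integrableOn_monomial_exp 0).const_mul a).add
    ((integrableOn_monomial_exp 1).const_mul b)).add ((integrableOn_monomial_exp 2).const_mul c)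

lemma integral_combo (a b c : ℝ) :
    (∫ w in Ioi (0:ℝ), (a + b*w + c*w^2) * Real.exp (-w)) = a + b + 2*c := by
  have heq : (fun w : ℝ => (a + b*w + c*w^2) * Real.exp (-w))
      = fun w : ℝ => a*(w^0*Real.exp (-w)) + b*(w^1*Real.exp (-w)) + c*(w^2*Real.exp (-w)) := by
    funext w; ring
  rw [heq]
  have h0 : IntegrableOn (fun w : ℝ => a*(w^0*Real.exp (-w))) (Ioi 0) :=
    (integrableOn_monomial_exp 0).const_mul a
  have h1 : IntegrableOn (fun w : ℝ => b*(w^1*Real.exp (-w))) (Ioi 0) :=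
    (integrableOn_monomial_exp 1).const_mul b
  have h2 : IntegrableOn (fun w : ℝ => c*(w^2*Real.exp (-w))) (Ioi 0) :=
    (integrableOn_monomial_exp 2).const_mul c
  have h01 : IntegrableOn (fun w : ℝ => a*(w^0*Real.exp (-w)) + b*(w^1*Real.exp (-w))) (Ioi 0) :=
    h0.add h1
  rw [integral_add h01 h2, integral_add h0 h1,
    integral_const_mul, integral_const_mul, integral_const_mul,
    integral_monomial_exp 0, integral_monomial_exp 1, integral_monomial_exp 2]
  norm_num [Nat.factorial]
  ring

lemma gdot_sq_div_g {w : ℝ} (hw : 0 < w) :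
    gdot w^2 / g w = (2 + (-2)*w + (1/2)*w^2) * Real.exp (-w) := by
  rw [g_of_pos hw]
  unfold gdot
  have he := (Real.exp_pos (-w)).ne'
  have hw' := hw.ne'
  field_simp
  ring

lemma integrableOn_gdot_sq : IntegrableOn (fun w : ℝ => gdot w^2 / g w) (Ioi 0) := by
  refine (integrableOn_combo 2 (-2) (1/2)).congr_fun (fun w hw => ?_) measurableSet_Ioi
  exact (gdot_sq_div_g hw).symm

lemma integral_gdot_sq : (∫ w in Ioi (0:ℝ), gdot w^2 / g w) = 1 := by
  rw [setIntegral_congr_fun measurableSet_Ioi (fun w hw => gdot_sq_div_g hw), integral_combo]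
  norm_num

lemma lintegral_ofReal_gdot_sq :
    ∫⁻ w in Ioi (0:ℝ), ENNReal.ofReal (gdot w^2 / g w) = 1 := by
  rw [← ofReal_integral_eq_lintegral_ofReal integrableOn_gdot_sq
    (Filter.Eventually.of_forall (fun w => div_nonneg (sq_nonneg _) (g_nonneg _)))]
  rw [integral_gdot_sq]
  norm_num

lemma Δ_sq_true (θ w : ℝ) :
    ENNReal.ofReal ((Δ θ (θ + w, true))^2) * ENNReal.ofReal (g w)
      = (Ioi (0:ℝ)).indicator (fun w => ENNReal.ofReal (gdot w^2 / g w)) w := by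
  by_cases hw : 0 < w
  · rw [Set.indicator_of_mem (mem_Ioi.2 hw)]
    have h1 : Δ θ (θ + w, true) = -gdot w / g w := by
      rw [Δ, if_pos (by simp [hw] : θ < (θ + w, true).1)]
      simp
    rw [h1, ← ENNReal.ofReal_mul (sq_nonneg _)]
    congr 1
    have hg := (g_pos hw).ne'
    field_simp
  · rw [Set.indicator_of_notMem (by simpa using hw), g_of_nonpos hw]
    simp

lemma Δ_sq_false (θ w : ℝ) :
    ENNReal.ofReal ((Δ θ (θ - w, false))^2) * ENNReal.ofReal (g w)
      = (Ioi (0:ℝ)).indicator (fun w => ENNReal.ofReal (gdot w^2 / g w)) w := by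
  by_cases hw : 0 < w
  · rw [Set.indicator_of_mem (mem_Ioi.2 hw)]
    have h1 : Δ θ (θ - w, false) = gdot w / g w := by
      rw [Δ, if_neg (by simp; linarith : ¬ θ < (θ - w, false).1),
        if_pos (by simp [hw] : (θ - w, false).1 < θ)]
      simp
    rw [h1, ← ENNReal.ofReal_mul (sq_nonneg _)]
    congr 1
    have hg := (g_pos hw).ne'
    field_simp
  · rw [Set.indicator_of_notMem (by simpa using hw), g_of_nonpos hw]
    simp

lemma Δ_sq_lintegral (θ : ℝ) :
    ∫⁻ x, ENNReal.ofReal ((Δ θ x)^2) ∂(P θ) = 1 := by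
  rw [lintegral_P θ _ (((measurable_Δ θ).pow_const 2).ennreal_ofReal)]
  simp_rw [Δ_sq_true θ, Δ_sq_false θ]
  rw [lintegral_indicator measurableSet_Ioi, lintegral_ofReal_gdot_sq]
  simp only [mul_one]
  rw [show (1/2 : ℝ≥0∞) = 2⁻¹ by norm_num, ENNReal.inv_two_add_inv_two]

lemma integrable_Δ_sq (θ : ℝ) : Integrable (fun x => (Δ θ x)^2) (P θ) := by
  constructor
  · exact ((measurable_Δ θ).pow_const 2).aestronglyMeasurable
  · rw [hasFiniteIntegral_iff_norm]
    have : ∀ x : ℝ × Bool, ENNReal.ofReal ‖(Δ θ x)^2‖ = ENNReal.ofReal ((Δ θ x)^2) := by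
      intro x
      rw [Real.norm_eq_abs, abs_of_nonneg (sq_nonneg _)]
    simp_rw [this]
    rw [Δ_sq_lintegral θ]
    exact ENNReal.one_lt_top

lemma integral_Δ_sq (θ : ℝ) : (∫ x, (Δ θ x)^2 ∂(P θ)) = 1 := by
  rw [integral_eq_lintegral_of_nonneg_ae (Filter.Eventually.of_forall (fun x => sq_nonneg _))
    ((measurable_Δ θ).pow_const 2).aestronglyMeasurable]
  rw [Δ_sq_lintegral θ]
  simp

noncomputable def s0 (u : ℝ) : ℝ := u * Real.exp (-(u/2)) / Real.sqrt 2

noncomputable def q0 (u : ℝ) : ℝ := (1 - u/2) * Real.exp (-(u/2)) / Real.sqrt 2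

noncomputable def q0d (u : ℝ) : ℝ := (u/4 - 1) * Real.exp (-(u/2)) / Real.sqrt 2

lemma sqrt_two_pos : (0:ℝ) < Real.sqrt 2 := Real.sqrt_pos.2 (by norm_num)

lemma hasDerivAt_half (u : ℝ) : HasDerivAt (fun u : ℝ => -(u/2)) (-(1/2)) u := by
  exact ((hasDerivAt_id u).div_const 2).neg

lemma hasDerivAt_s0 (u : ℝ) : HasDerivAt s0 (q0 u) u := by
  have hexp := (hasDerivAt_half u).exp
  have h := ((hasDerivAt_id u).mul hexp).div_const (Real.sqrt 2)
  simp only [id_eq, one_mul] at h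
  refine h.congr_deriv ?_
  unfold q0
  ring

lemma hasDerivAt_q0 (u : ℝ) : HasDerivAt q0 (q0d u) u := by
  have hexp := (hasDerivAt_half u).exp
  have h1 : HasDerivAt (fun u : ℝ => 1 - u/2) (-(1/2)) u := by
    simpa using ((hasDerivAt_id u).div_const 2).const_sub 1
  have h := (h1.mul hexp).div_const (Real.sqrt 2)
  refine h.congr_deriv ?_
  unfold q0d
  ring

lemma exp_half_sq (u : ℝ) : Real.exp (-(u/2)) ^ 2 = Real.exp (-u) := by
  rw [sq, ← Real.exp_add]
  ring_nf

lemma s0_nonneg {u : ℝ} (hu : 0 ≤ u) : 0 ≤ s0 u := by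
  unfold s0
  have := Real.exp_nonneg (-(u/2))
  positivity

lemma sqrt_g_eq {w : ℝ} (hw : 0 < w) : Real.sqrt (g w) = s0 w := by
  have h : g w = (s0 w)^2 := by
    rw [g_of_pos hw]
    unfold s0
    rw [div_pow, mul_pow, exp_half_sq, Real.sq_sqrt (by norm_num : (0:ℝ) ≤ 2)]
    ring
  rw [h, Real.sqrt_sq (s0_nonneg hw.le)]

lemma sqrt_g_zero {w : ℝ} (hw : ¬ 0 < w) : Real.sqrt (g w) = 0 := by
  rw [g_of_nonpos hw, Real.sqrt_zero]

lemma q_eq {w : ℝ} (hw : 0 < w) : gdot w / (2 * Real.sqrt (g w)) = q0 w := by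
  rw [sqrt_g_eq hw]
  unfold gdot s0 q0
  have h2 : Real.sqrt 2 ≠ 0 := sqrt_two_pos.ne'
  have he : Real.exp (-(w/2)) ≠ 0 := (Real.exp_pos _).ne'
  have hw' : w ≠ 0 := hw.ne'
  have hes : Real.exp (-w) = Real.exp (-(w/2)) * Real.exp (-(w/2)) := by
    rw [← Real.exp_add]; ring_nf
  rw [hes]
  field_simp
  have hss : Real.sqrt 2 * Real.sqrt 2 = 2 := Real.mul_self_sqrt (by norm_num)
  linear_combination (2 * (w * 2 - w ^ 2) * (Real.exp (-w / 2) * Real.exp (-w / 2)) + (2 - w - 4 * w * Real.exp (-w / 2) ^ 2 + 2 * w ^ 2 * Real.exp (-w / 2) ^ 2)) * hss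

noncomputable def M (w : ℝ) : ℝ := (5/4 + w/4) * Real.exp ((1-w)/2) / Real.sqrt 2

lemma M_nonneg {w : ℝ} (hw : 0 < w) : 0 ≤ M w := by
  unfold M
  have := Real.exp_nonneg ((1-w)/2)
  have := sqrt_two_pos
  positivity

lemma q0d_bound {w u t : ℝ} (hw : 0 < w) (ht : |t| ≤ 1) (hu : u ∈ uIcc (w - t) w) :
    |q0d u| ≤ M w := by
  obtain ⟨ht1, ht2⟩ := abs_le.1 ht
  have hu1 : w - 1 ≤ u ∧ u ≤ w + 1 := by
    rcases mem_uIcc.1 hu with ⟨h1, h2⟩ | ⟨h1, h2⟩ <;> constructor <;> linarith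
  obtain ⟨hu1, hu2⟩ := hu1
  unfold q0d M
  rw [abs_div, abs_mul, abs_of_pos (Real.exp_pos _), abs_of_pos sqrt_two_pos]
  have h1 : |u/4 - 1| ≤ 5/4 + w/4 := by
    rw [abs_le]; constructor <;> linarith
  have h2 : Real.exp (-(u/2)) ≤ Real.exp ((1-w)/2) := by
    apply Real.exp_le_exp.2; linarith
  apply (div_le_div_iff_of_pos_right sqrt_two_pos).2
  exact mul_le_mul h1 h2 (Real.exp_nonneg _) (by linarith)

lemma taylor_bd {w t : ℝ} (ht : |t| ≤ 1) (hw : 0 < w) :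
    |s0 (w - t) - s0 w + t * q0 w| ≤ M w * t^2 := by
  have hconv : Convex ℝ (uIcc (w - t) w) := convex_uIcc _ _
  have habs : ∀ v ∈ uIcc (w - t) w, |v - w| ≤ |t| := by
    intro v hv
    rcases mem_uIcc.1 hv with ⟨h1, h2⟩ | ⟨h1, h2⟩ <;>
      · rw [abs_le]
        constructor <;> [linarith [neg_abs_le t, le_abs_self t]; linarith [neg_abs_le t, le_abs_self t]]
  have hq : ∀ v ∈ uIcc (w - t) w, ‖q0 v - q0 w‖ ≤ M w * |t| := by
    intro v hv
    have := hconv.norm_image_sub_le_of_norm_hasDerivWithin_le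
      (f := q0) (f' := q0d)
      (fun u hu => (hasDerivAt_q0 u).hasDerivWithinAt)
      (fun u hu => q0d_bound hw ht hu)
      (right_mem_uIcc) hv
    calc ‖q0 v - q0 w‖ ≤ M w * ‖v - w‖ := this
      _ ≤ M w * |t| := by
          have := habs v hv
          have hM := M_nonneg hw
          rw [Real.norm_eq_abs]
          exact mul_le_mul_of_nonneg_left this hM
  have hG : ∀ v ∈ uIcc (w - t) w,
      HasDerivWithinAt (fun v => s0 v - v * q0 w) (q0 v - q0 w) (uIcc (w - t) w) v := by
    intro v hv
    have h := (hasDerivAt_s0 v).sub ((hasDerivAt_id v).mul_const (q0 w))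
    simp only [id_eq, one_mul] at h
    exact h.hasDerivWithinAt
  have := hconv.norm_image_sub_le_of_norm_hasDerivWithin_le hG
    (fun v hv => hq v hv) (right_mem_uIcc) (left_mem_uIcc)
  rw [Real.norm_eq_abs, Real.norm_eq_abs] at this
  calc |s0 (w - t) - s0 w + t * q0 w|
      = |s0 (w - t) - (w - t) * q0 w - (s0 w - w * q0 w)| := by congr 1; ring
    _ ≤ M w * |t| * |w - t - w| := this
    _ = M w * t^2 := by
        rw [show w - t - w = -t by ring, abs_neg, mul_assoc, abs_mul_abs_self, ← sq]

@[fun_prop]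
lemma measurable_M : Measurable M := by unfold M; fun_prop

lemma M_sq (w : ℝ) : M w ^ 2
    = (25*Real.exp 1/32 + (5*Real.exp 1/16)*w + (Real.exp 1/32)*w^2) * Real.exp (-w) := by
  unfold M
  rw [div_pow, mul_pow, Real.sq_sqrt (by norm_num : (0:ℝ) ≤ 2)]
  have h : Real.exp ((1-w)/2) ^ 2 = Real.exp 1 * Real.exp (-w) := by
    rw [sq, ← Real.exp_add, ← Real.exp_add]; ring_nf
  rw [h]; ring

lemma integrableOn_M_sq : IntegrableOn (fun w : ℝ => M w ^ 2) (Ioi 0) := by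
  refine (integrableOn_combo (25*Real.exp 1/32) (5*Real.exp 1/16) (Real.exp 1/32)).congr_fun
    (fun w hw => ?_) measurableSet_Ioi
  exact (M_sq w).symm

lemma integral_M_sq_le : (∫ w in Ioi (0:ℝ), M w ^ 2) ≤ 4 := by
  rw [setIntegral_congr_fun measurableSet_Ioi (fun w _ => M_sq w), integral_combo]
  have he := Real.exp_one_lt_d9
  nlinarith [Real.exp_pos 1]

noncomputable def Bfun (t : ℝ) : ℝ≥0∞ :=
  ∫⁻ w in Ioi (0:ℝ), ENNReal.ofReal
    ((Real.sqrt (g (w - t)) - Real.sqrt (g w) + t * (gdot w / (2 * Real.sqrt (g w))))^2)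

lemma smooth_bound {t w : ℝ} (ht : |t| ≤ 1) (hw : 0 < w) (hwt : t < w) :
    ENNReal.ofReal ((Real.sqrt (g (w - t)) - Real.sqrt (g w)
      + t * (gdot w / (2 * Real.sqrt (g w))))^2) ≤ ENNReal.ofReal (t^4 * M w ^2) := by
  rw [q_eq hw, sqrt_g_eq hw, sqrt_g_eq (by linarith : 0 < w - t)]
  apply ENNReal.ofReal_le_ofReal
  have hb := taylor_bd ht hw
  calc (s0 (w - t) - s0 w + t * q0 w)^2
      = |s0 (w - t) - s0 w + t * q0 w|^2 := (sq_abs _).symm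
    _ ≤ (M w * t^2)^2 := pow_le_pow_left₀ (abs_nonneg _) hb 2
    _ = t^4 * M w^2 := by ring

lemma lint_M_sq (t : ℝ) :
    ∫⁻ w in Ioi (0:ℝ), ENNReal.ofReal (t^4 * M w ^2) ≤ ENNReal.ofReal (t^4 * 4) := by
  rw [← ofReal_integral_eq_lintegral_ofReal (integrableOn_M_sq.const_mul (t^4))
    (Filter.Eventually.of_forall fun w => by positivity)]
  apply ENNReal.ofReal_le_ofReal
  rw [integral_const_mul]
  exact mul_le_mul_of_nonneg_left integral_M_sq_le (by positivity)

lemma B_le {t : ℝ} (ht : |t| ≤ 1) : Bfun t ≤ ENNReal.ofReal (10 * |t|^3) := by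
  have hmeas : Measurable fun w : ℝ => ENNReal.ofReal (t^4 * M w ^2) := by fun_prop
  rcases le_or_gt t 0 with htneg | htpos
  · calc Bfun t ≤ ∫⁻ w in Ioi (0:ℝ), ENNReal.ofReal (t^4 * M w ^2) :=
          setLIntegral_mono hmeas (fun w hw => smooth_bound ht hw (lt_of_le_of_lt htneg hw))
      _ ≤ ENNReal.ofReal (t^4 * 4) := lint_M_sq t
      _ ≤ ENNReal.ofReal (10 * |t|^3) := by
          apply ENNReal.ofReal_le_ofReal
          have h1 : t^4 = |t|^4 := (abs_pow t 4).symm ▸ (abs_of_nonneg (by positivity)).symm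
          nlinarith [abs_nonneg t, pow_nonneg (abs_nonneg t) 3]
  · have ht2 : t ≤ 1 := by rw [abs_of_pos htpos] at ht; exact ht
    have hsplit : Ioi (0:ℝ) = Ioc 0 t ∪ Ioi t := (Ioc_union_Ioi_eq_Ioi htpos.le).symm
    rw [Bfun, hsplit, lintegral_union measurableSet_Ioi (Ioc_disjoint_Ioi le_rfl)]
    have h1 : (∫⁻ w in Ioc (0:ℝ) t, ENNReal.ofReal
        ((Real.sqrt (g (w - t)) - Real.sqrt (g w) + t * (gdot w / (2 * Real.sqrt (g w))))^2))
        ≤ ENNReal.ofReal (4*t^3) := by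
      have hptwise : ∀ w ∈ Ioc (0:ℝ) t, ENNReal.ofReal
          ((Real.sqrt (g (w - t)) - Real.sqrt (g w) + t * (gdot w / (2 * Real.sqrt (g w))))^2)
          ≤ ENNReal.ofReal (4*t^2) := by
        intro w hw
        obtain ⟨hw0, hwt⟩ := hw
        rw [q_eq hw0, sqrt_g_zero (not_lt.2 (by linarith : w - t ≤ 0)), sqrt_g_eq hw0]
        apply ENNReal.ofReal_le_ofReal
        have hE : Real.exp (-(w/2)) ≤ 1 := Real.exp_le_one_iff.2 (by linarith)
        have h12 : (1:ℝ) ≤ Real.sqrt 2 := by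
          rw [show (1:ℝ) = Real.sqrt 1 from (Real.sqrt_one).symm]
          exact Real.sqrt_le_sqrt (by norm_num)
        have hs0 : 0 ≤ s0 w := s0_nonneg hw0.le
        have hs0' : s0 w ≤ t := by
          unfold s0
          calc w * Real.exp (-(w/2)) / Real.sqrt 2 ≤ w * Real.exp (-(w/2)) :=
                div_le_self (by positivity) h12
            _ ≤ w * 1 := mul_le_mul_of_nonneg_left hE hw0.le
            _ = w := mul_one w
            _ ≤ t := hwt
        have hq0' : |q0 w| ≤ 1 := by
          unfold q0
          rw [abs_div, abs_mul, abs_of_pos (Real.exp_pos _), abs_of_pos sqrt_two_pos]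
          have : |1 - w/2| ≤ 1 := abs_le.2 ⟨by linarith, by linarith⟩
          calc |1 - w/2| * Real.exp (-(w/2)) / Real.sqrt 2
              ≤ |1 - w/2| * Real.exp (-(w/2)) := div_le_self (by positivity) h12
            _ ≤ 1 * 1 := mul_le_mul this hE (Real.exp_nonneg _) (by norm_num)
            _ = 1 := one_mul 1
        have habs : |0 - s0 w + t * q0 w| ≤ 2*t := by
          calc |0 - s0 w + t * q0 w| = |(-(s0 w)) + t * q0 w| := by ring_nf
            _ ≤ |(-(s0 w))| + |t * q0 w| := abs_add_le _ _
            _ = s0 w + t * |q0 w| := by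
                rw [abs_neg, abs_of_nonneg hs0, abs_mul, abs_of_pos htpos]
            _ ≤ t + t * 1 := add_le_add hs0' (mul_le_mul_of_nonneg_left hq0' htpos.le)
            _ = 2*t := by ring
        calc (0 - s0 w + t * q0 w)^2 = |0 - s0 w + t * q0 w|^2 := (sq_abs _).symm
          _ ≤ (2*t)^2 := pow_le_pow_left₀ (abs_nonneg _) habs 2
          _ = 4*t^2 := by ring
      calc (∫⁻ w in Ioc (0:ℝ) t, ENNReal.ofReal
          ((Real.sqrt (g (w - t)) - Real.sqrt (g w) + t * (gdot w / (2 * Real.sqrt (g w))))^2))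
          ≤ ∫⁻ _ in Ioc (0:ℝ) t, ENNReal.ofReal (4*t^2) :=
            setLIntegral_mono measurable_const hptwise
        _ = ENNReal.ofReal (4*t^2) * volume (Ioc (0:ℝ) t) := setLIntegral_const _ _
        _ = ENNReal.ofReal (4*t^2) * ENNReal.ofReal t := by
            rw [Real.volume_Ioc]; norm_num
        _ = ENNReal.ofReal (4*t^3) := by
            rw [← ENNReal.ofReal_mul (by positivity)]
            congr 1; ring
    have h2 : (∫⁻ w in Ioi t, ENNReal.ofReal
        ((Real.sqrt (g (w - t)) - Real.sqrt (g w) + t * (gdot w / (2 * Real.sqrt (g w))))^2))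
        ≤ ENNReal.ofReal (t^4 * 4) := by
      calc (∫⁻ w in Ioi t, ENNReal.ofReal
          ((Real.sqrt (g (w - t)) - Real.sqrt (g w) + t * (gdot w / (2 * Real.sqrt (g w))))^2))
          ≤ ∫⁻ w in Ioi t, ENNReal.ofReal (t^4 * M w ^2) :=
            setLIntegral_mono hmeas (fun w hw => smooth_bound ht (lt_trans htpos hw) hw)
        _ ≤ ∫⁻ w in Ioi (0:ℝ), ENNReal.ofReal (t^4 * M w ^2) :=
            lintegral_mono_set (Ioi_subset_Ioi htpos.le)
        _ ≤ ENNReal.ofReal (t^4 * 4) := lint_M_sq t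
    calc _ ≤ ENNReal.ofReal (4*t^3) + ENNReal.ofReal (t^4 * 4) := add_le_add h1 h2
      _ = ENNReal.ofReal (4*t^3 + t^4 * 4) := (ENNReal.ofReal_add (by positivity) (by positivity)).symm
      _ ≤ ENNReal.ofReal (10 * |t|^3) := by
          apply ENNReal.ofReal_le_ofReal
          rw [abs_of_pos htpos]
          nlinarith [pow_pos htpos 3, pow_pos htpos 4]

lemma quad_true (θ t w : ℝ) :
    ENNReal.ofReal ((Real.sqrt (p t θ (θ + w, true)) - 1 - (t/2) * Δ θ (θ + w, true))^2)
      * ENNReal.ofReal (g w)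
    = (Ioi (0:ℝ)).indicator (fun w => ENNReal.ofReal
        ((Real.sqrt (g (w - t)) - Real.sqrt (g w) + t * (gdot w / (2 * Real.sqrt (g w))))^2)) w := by
  by_cases hw : 0 < w
  · rw [Set.indicator_of_mem (mem_Ioi.2 hw)]
    have hgw := g_pos hw
    have hf : f θ (θ + w, true) = g w := by simp [f]
    have hft : f (θ + t) (θ + w, true) = g (w - t) := by
      have he : θ + w - (θ + t) = w - t := by ring
      simp [f, he]
    have hp : p t θ (θ + w, true) = g (w - t) / g w := by
      rw [p, hf, if_pos hgw, hft]
    have hΔ : Δ θ (θ + w, true) = -gdot w / g w := by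
      rw [Δ, if_pos (by simp [hw] : θ < (θ + w, true).1)]
      simp
    rw [hp, hΔ, ← ENNReal.ofReal_mul (sq_nonneg _)]
    congr 1
    rw [Real.sqrt_div (g_nonneg (w - t)) (g w)]
    set b := Real.sqrt (g w) with hb
    have hbpos : 0 < b := Real.sqrt_pos.2 hgw
    have hgb : g w = b^2 := (Real.sq_sqrt (g_nonneg w)).symm
    rw [hgb]
    field_simp
    ring
  · rw [Set.indicator_of_notMem (by simpa using hw), g_of_nonpos hw]
    simp

lemma quad_false (θ t w : ℝ) :
    ENNReal.ofReal ((Real.sqrt (p t θ (θ - w, false)) - 1 - (t/2) * Δ θ (θ - w, false))^2)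
      * ENNReal.ofReal (g w)
    = (Ioi (0:ℝ)).indicator (fun w => ENNReal.ofReal
        ((Real.sqrt (g (w - (-t))) - Real.sqrt (g w)
          + (-t) * (gdot w / (2 * Real.sqrt (g w))))^2)) w := by
  by_cases hw : 0 < w
  · rw [Set.indicator_of_mem (mem_Ioi.2 hw)]
    have hgw := g_pos hw
    have hf : f θ (θ - w, false) = g w := by simp [f]
    have hft : f (θ + t) (θ - w, false) = g (w - (-t)) := by
      have he : (θ + t) - (θ - w) = w - (-t) := by ring
      simp only [f, Bool.false_eq_true, if_false]
      rw [he]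
    have hp : p t θ (θ - w, false) = g (w - (-t)) / g w := by
      rw [p, hf, if_pos hgw, hft]
    have hΔ : Δ θ (θ - w, false) = gdot w / g w := by
      rw [Δ, if_neg (by simp; linarith : ¬ θ < (θ - w, false).1),
        if_pos (by simp [hw] : (θ - w, false).1 < θ)]
      simp
    rw [hp, hΔ, ← ENNReal.ofReal_mul (sq_nonneg _)]
    congr 1
    rw [Real.sqrt_div (g_nonneg (w - (-t))) (g w)]
    set b := Real.sqrt (g w) with hb
    have hbpos : 0 < b := Real.sqrt_pos.2 hgw
    have hgb : g w = b^2 := (Real.sq_sqrt (g_nonneg w)).symm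
    rw [hgb]
    field_simp
    ring
  · rw [Set.indicator_of_notMem (by simpa using hw), g_of_nonpos hw]
    simp

lemma measurable_quad (θ t : ℝ) :
    Measurable fun x : ℝ × Bool =>
      ENNReal.ofReal ((Real.sqrt (p t θ x) - 1 - (t/2) * Δ θ x)^2) := by
  apply Measurable.ennreal_ofReal
  apply Measurable.pow_const
  exact ((Real.continuous_sqrt.measurable.comp (measurable_p t θ)).sub measurable_const).sub
    (measurable_const.mul (measurable_Δ θ))

lemma half_add_half (a : ℝ≥0∞) : 1/2 * a + 1/2 * a = a := by
  rw [← add_mul, show (1/2 : ℝ≥0∞) + 1/2 = 1 by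
    rw [show (1/2:ℝ≥0∞) = 2⁻¹ by norm_num]
    exact ENNReal.inv_two_add_inv_two, one_mul]

lemma quad_lintegral (θ t : ℝ) :
    ∫⁻ x, ENNReal.ofReal ((Real.sqrt (p t θ x) - 1 - (t/2) * Δ θ x)^2) ∂(P θ)
      = 1/2 * Bfun t + 1/2 * Bfun (-t) := by
  rw [lintegral_P θ _ (measurable_quad θ t)]
  simp_rw [quad_true θ t, quad_false θ t]
  rw [lintegral_indicator measurableSet_Ioi, lintegral_indicator measurableSet_Ioi]
  rfl

lemma quad_integral_bound (θ : ℝ) {t : ℝ} (ht : |t| ≤ 1) :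
    (∫ x, (Real.sqrt (p t θ x) - 1 - (t/2) * Δ θ x)^2 ∂(P θ)) ≤ 10 * |t|^3 := by
  have hm : AEStronglyMeasurable
      (fun x : ℝ × Bool => (Real.sqrt (p t θ x) - 1 - (t/2) * Δ θ x)^2) (P θ) :=
    ((((Real.continuous_sqrt.measurable.comp (measurable_p t θ)).sub measurable_const).sub
      (measurable_const.mul (measurable_Δ θ))).pow_const 2).aestronglyMeasurable
  rw [integral_eq_lintegral_of_nonneg_ae (Filter.Eventually.of_forall fun x => sq_nonneg _) hm]
  apply ENNReal.toReal_le_of_le_ofReal (by positivity)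
  rw [quad_lintegral]
  have h1 := B_le ht
  have h2 : Bfun (-t) ≤ ENNReal.ofReal (10 * |t|^3) := by
    have := B_le (t := -t) (by rwa [abs_neg])
    rwa [abs_neg] at this
  calc 1/2 * Bfun t + 1/2 * Bfun (-t)
      ≤ 1/2 * ENNReal.ofReal (10*|t|^3) + 1/2 * ENNReal.ofReal (10*|t|^3) := by gcongr
    _ = ENNReal.ofReal (10*|t|^3) := half_add_half _

lemma littleO_cube {h : ℝ → ℝ} (C : ℝ) (hC : 0 < C)
    (hh : ∀ t : ℝ, |t| ≤ 1 → 0 ≤ h t ∧ h t ≤ C * |t|^3) :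
    h =o[𝓝 (0:ℝ)] fun t => t^2 := by
  rw [isLittleO_iff]
  intro ε hε
  rw [Metric.eventually_nhds_iff]
  refine ⟨min 1 (ε / C), lt_min one_pos (div_pos hε hC), fun t hdist => ?_⟩
  rw [Real.dist_eq, sub_zero] at hdist
  have h1 : |t| ≤ 1 := le_trans hdist.le (min_le_left _ _)
  have h2 : |t| ≤ ε / C := le_trans hdist.le (min_le_right _ _)
  obtain ⟨hpos, hle⟩ := hh t h1
  rw [Real.norm_eq_abs, Real.norm_eq_abs, abs_of_nonneg hpos, abs_of_nonneg (sq_nonneg t)]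
  have h3 : |t|^3 = t^2 * |t| := by rw [pow_succ, sq_abs]
  calc h t ≤ C * |t|^3 := hle
    _ = C * (t^2 * |t|) := by rw [h3]
    _ ≤ C * (t^2 * (ε/C)) :=
        mul_le_mul_of_nonneg_left (mul_le_mul_of_nonneg_left h2 (sq_nonneg t)) hC.le
    _ = ε * t^2 := by field_simp

lemma sing_bound (θ t : ℝ) :
    P (θ + t) {x : ℝ × Bool | f θ x = 0} ≤ ENNReal.ofReal (|t|^3) := by
  have hS : MeasurableSet {x : ℝ × Bool | f θ x = 0} :=
    (measurable_f θ) (measurableSet_singleton 0)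
  rw [← lintegral_indicator_one hS, lintegral_P (θ + t) _ (measurable_one.indicator hS)]
  have key : ∀ (b : Bool) (hfb : ∀ w : ℝ, f θ ((θ + t) + w, true) = g (t + w)), True := fun _ _ => trivial
  have htrue : ∀ w : ℝ, ({x : ℝ × Bool | f θ x = 0}).indicator 1 ((θ + t) + w, true)
        * ENNReal.ofReal (g w)
      ≤ (Ioc (0:ℝ) |t|).indicator (fun _ => ENNReal.ofReal (t^2/2)) w := by
    intro w
    by_cases hw : 0 < w
    · by_cases hmem : ((θ + t) + w, true) ∈ {x : ℝ × Bool | f θ x = 0}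
      · have hfw : f θ ((θ + t) + w, true) = g (t + w) := by
          simp only [f]
          norm_num
          congr 1
          ring
        have hwt : t + w ≤ 0 := by
          by_contra hcon
          push_neg at hcon
          exact (g_pos hcon).ne' (hfw ▸ hmem)
        have hwmem : w ∈ Ioc (0:ℝ) |t| := ⟨hw, by
          have := neg_le_abs t
          linarith⟩
        rw [Set.indicator_of_mem hmem, Set.indicator_of_mem hwmem, Pi.one_apply, one_mul]
        apply ENNReal.ofReal_le_ofReal
        rw [g_of_pos hw]
        have hE : Real.exp (-w) ≤ 1 := Real.exp_le_one_iff.2 (by linarith)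
        have hw2 : w^2 ≤ t^2 := by
          rw [← sq_abs t]
          apply pow_le_pow_left₀ hw.le (by
            have := neg_le_abs t
            linarith) 2
        nlinarith [Real.exp_nonneg (-w), sq_nonneg w]
      · rw [Set.indicator_of_notMem hmem, zero_mul]
        exact zero_le
    · rw [g_of_nonpos hw]
      simp
  have hfalse : ∀ w : ℝ, ({x : ℝ × Bool | f θ x = 0}).indicator 1 ((θ + t) - w, false)
        * ENNReal.ofReal (g w)
      ≤ (Ioc (0:ℝ) |t|).indicator (fun _ => ENNReal.ofReal (t^2/2)) w := by
    intro w
    by_cases hw : 0 < w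
    · by_cases hmem : ((θ + t) - w, false) ∈ {x : ℝ × Bool | f θ x = 0}
      · have hfw : f θ ((θ + t) - w, false) = g (w - t) := by
          simp only [f]
          norm_num
          congr 1
          ring
        have hwt : w - t ≤ 0 := by
          by_contra hcon
          push_neg at hcon
          exact (g_pos hcon).ne' (hfw ▸ hmem)
        have hwmem : w ∈ Ioc (0:ℝ) |t| := ⟨hw, by
          have := le_abs_self t
          linarith⟩
        rw [Set.indicator_of_mem hmem, Set.indicator_of_mem hwmem, Pi.one_apply, one_mul]
        apply ENNReal.ofReal_le_ofReal
        rw [g_of_pos hw]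
        have hE : Real.exp (-w) ≤ 1 := Real.exp_le_one_iff.2 (by linarith)
        have hw2 : w^2 ≤ t^2 := by
          rw [← sq_abs t]
          apply pow_le_pow_left₀ hw.le (by
            have := le_abs_self t
            linarith) 2
        nlinarith [Real.exp_nonneg (-w), sq_nonneg w]
      · rw [Set.indicator_of_notMem hmem, zero_mul]
        exact zero_le
    · rw [g_of_nonpos hw]
      simp
  have hind : (∫⁻ w, (Ioc (0:ℝ) |t|).indicator (fun _ => ENNReal.ofReal (t^2/2)) w)
      ≤ ENNReal.ofReal (|t|^3) := by
    rw [lintegral_indicator measurableSet_Ioc, setLIntegral_const, Real.volume_Ioc]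
    rw [← ENNReal.ofReal_mul (by positivity)]
    apply ENNReal.ofReal_le_ofReal
    have h3 : |t|^3 = t^2 * |t| := by rw [pow_succ, sq_abs]
    rw [h3]
    nlinarith [abs_nonneg t, sq_nonneg t]
  calc 1/2 * (∫⁻ w, ({x : ℝ × Bool | f θ x = 0}).indicator 1 ((θ + t) + w, true)
          * ENNReal.ofReal (g w))
      + 1/2 * (∫⁻ w, ({x : ℝ × Bool | f θ x = 0}).indicator 1 ((θ + t) - w, false)
          * ENNReal.ofReal (g w))
      ≤ 1/2 * (∫⁻ w, (Ioc (0:ℝ) |t|).indicator (fun _ => ENNReal.ofReal (t^2/2)) w)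
        + 1/2 * (∫⁻ w, (Ioc (0:ℝ) |t|).indicator (fun _ => ENNReal.ofReal (t^2/2)) w) := by
        exact add_le_add (mul_le_mul_right (lintegral_mono htrue) _)
          (mul_le_mul_right (lintegral_mono hfalse) _)
    _ = ∫⁻ w, (Ioc (0:ℝ) |t|).indicator (fun _ => ENNReal.ofReal (t^2/2)) w := half_add_half _
    _ ≤ ENNReal.ofReal (|t|^3) := hind

end Stmt8

/-- (a) `Δ_θ` is square integrable with
`∫ Δ_θ² dP_θ = ∫_0^∞ ġ(w)²/g(w) dw = 1`; and (b) the family `{P_θ}` is differentiable in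
quadratic mean at every `θ` with score `Δ_θ`:
`∫ (√(p_{t,θ}) − 1 − (t/2)Δ_θ)² dP_θ = o(t²)` as `t → 0`, and the `P_θ`-singular part of
`P_{θ+t}` has mass `o(t²)`. -/
theorem stmt8 (θ : ℝ) :
    MemLp (Δ θ) 2 (P θ) ∧
    (∫ x, (Δ θ x)^2 ∂(P θ) = ∫ w in Ioi (0:ℝ), (gdot w)^2 / g w) ∧
    (∫ w in Ioi (0:ℝ), (gdot w)^2 / g w = 1) ∧
    ((fun t : ℝ =>
        ∫ x, (Real.sqrt (p t θ x) - 1 - (t/2) * Δ θ x)^2 ∂(P θ))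
      =o[𝓝 0] fun t : ℝ => t^2) ∧
    ((fun t : ℝ => (P (θ + t) {x : ℝ × Bool | f θ x = 0}).toReal)
      =o[𝓝 0] fun t : ℝ => t^2) := by
  refine ⟨?_, ?_, ?_, ?_, ?_⟩
  · exact (memLp_two_iff_integrable_sq
      ((Stmt8.measurable_Δ θ).aestronglyMeasurable)).2 (Stmt8.integrable_Δ_sq θ)
  · rw [Stmt8.integral_Δ_sq, Stmt8.integral_gdot_sq]
  · exact Stmt8.integral_gdot_sq
  · apply Stmt8.littleO_cube 10 (by norm_num)
    intro t ht
    exact ⟨integral_nonneg (fun x => sq_nonneg _), Stmt8.quad_integral_bound θ ht⟩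
  · apply Stmt8.littleO_cube 1 (by norm_num)
    intro t ht
    refine ⟨ENNReal.toReal_nonneg, ?_⟩
    rw [one_mul]
    exact ENNReal.toReal_le_of_le_ofReal (by positivity) (Stmt8.sing_bound θ t)
end

section
/- (Theorem, part (ii): characterization of preservation of Fisher information.) Let (𝒳,𝒜) and (𝒴,ℬ) be measurable spaces, S : 𝒳 → 𝒴 measurable, P_θ a probability measure on (𝒳,𝒜), Q_θ = S P_θ, Δ_θ ∈ L²(P_θ), and let Δ̃_θ : 𝒴 → ℝ be measurable with Δ̃_θ ∘ S a version of the conditional expectation of Δ_θ given S^{-1}(ℬ) under P_θ. Then the Pythagorean identity holds: ∫ Δ_θ² dP_θ = ∫ Δ̃_θ² dQ_θ + ∫ (Δ_θ − Δ̃_θ ∘ S)² dP_θ. Consequently ∫ Δ̃_θ² dQ_θ ≤ ∫ Δ_θ² dP_θ, with equality (i.e., Fisher information is preserved, ℐ_𝒬(θ) = ℐ_𝒫(θ)) if and only if Δ_θ(x) = Δ̃_θ(Sx) for P_θ-almost every x. -/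
open MeasureTheory Real Set

/-- Product of two L² real functions is integrable. -/
lemma memℒp_two_mul_integrable {α : Type*} [MeasurableSpace α] {μ : Measure α}
    {f g : α → ℝ} (hf : MemLp f 2 μ) (hg : MemLp g 2 μ) :
    Integrable (fun x => f x * g x) μ := by
  have h1 : Integrable (fun x => ((f x + g x) ^ 2 - f x ^ 2 - g x ^ 2) * (1/2)) μ :=
    (((hf.add hg).integrable_sq.sub hf.integrable_sq).sub hg.integrable_sq).mul_const _
  refine h1.congr (Filter.Eventually.of_forall fun x => ?_)
  ring

/-- Theorem, part (ii): characterization of preservation of Fisher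
information.  Let `S : 𝒳 → 𝒴` be measurable, `P_θ` a probability measure on `𝒳`,
`Q_θ = S P_θ`, `Δ_θ ∈ L²(P_θ)`, and `Δ̃_θ : 𝒴 → ℝ` measurable with `Δ̃_θ ∘ S` a version
of the conditional expectation of `Δ_θ` given `S⁻¹ℬ` under `P_θ`.  Then the Pythagorean
identity holds: `∫ Δ_θ² dP_θ = ∫ Δ̃_θ² dQ_θ + ∫ (Δ_θ − Δ̃_θ ∘ S)² dP_θ`.  Consequently
`∫ Δ̃_θ² dQ_θ ≤ ∫ Δ_θ² dP_θ`, with equality (Fisher information is preserved) if and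
only if `Δ_θ(x) = Δ̃_θ(Sx)` for `P_θ`-almost every `x`. -/
theorem stmt11 {X Y : Type*} [MeasurableSpace X] [mY : MeasurableSpace Y]
    (S : X → Y) (hS : Measurable S)
    (Pθ : Measure X) [IsProbabilityMeasure Pθ]
    (Δ : X → ℝ) (hΔ : MemLp Δ 2 Pθ)
    (Δtil : Y → ℝ) (hΔtil : Measurable Δtil)
    (hcond : (fun x => Δtil (S x)) =ᵐ[Pθ] Pθ[Δ | MeasurableSpace.comap S mY]) :
    (∫ x, (Δ x)^2 ∂Pθ
        = (∫ y, (Δtil y)^2 ∂(Pθ.map S)) + ∫ x, (Δ x - Δtil (S x))^2 ∂Pθ) ∧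
    (∫ y, (Δtil y)^2 ∂(Pθ.map S) ≤ ∫ x, (Δ x)^2 ∂Pθ) ∧
    ((∫ y, (Δtil y)^2 ∂(Pθ.map S) = ∫ x, (Δ x)^2 ∂Pθ)
      ↔ Δ =ᵐ[Pθ] fun x => Δtil (S x)) := by
  have hm := hS.comap_le
  set g : X → ℝ := fun x => Δtil (S x) with hg_def
  have hgmeas : Measurable[MeasurableSpace.comap S mY] g :=
    fun s hs => ⟨Δtil ⁻¹' s, hΔtil hs, rfl⟩
  have hΔint : Integrable Δ Pθ := hΔ.integrable one_le_two
  -- g is in L² : it is a.e. equal to condexpL2 of Δ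
  have hg2 : MemLp g 2 Pθ := by
    set G : Lp ℝ 2 Pθ := ↑(condExpL2 ℝ ℝ hm (hΔ.toLp Δ)) with hG_def
    have hGcond : (G : X → ℝ) =ᵐ[Pθ] Pθ[Δ|MeasurableSpace.comap S mY] := by
      refine ae_eq_condExp_of_forall_setIntegral_eq hm hΔint
        (fun s _ _ => ((Lp.memLp G).integrable one_le_two).integrableOn) ?_
        (aestronglyMeasurable_condExpL2 hm (hΔ.toLp Δ))
      intro s hs hμs
      rw [integral_condExpL2_eq hm (hΔ.toLp Δ) hs hμs.ne]
      exact setIntegral_congr_ae (hm s hs) ((hΔ.coeFn_toLp).mono fun x hx _ => hx)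
    exact (Lp.memLp G).ae_eq (hGcond.trans hcond.symm)
  -- change of variables
  have hmap : ∫ y, (Δtil y)^2 ∂(Pθ.map S) = ∫ x, (g x)^2 ∂Pθ := by
    rw [integral_map hS.aemeasurable]
    exact ((hΔtil.pow_const 2).aestronglyMeasurable)
  -- the cross identity: ∫ g * Δ = ∫ g²
  have hgΔ : Integrable (fun x => g x * Δ x) Pθ := memℒp_two_mul_integrable hg2 hΔ
  have hgg : Integrable (fun x => g x * g x) Pθ := memℒp_two_mul_integrable hg2 hg2
  have hcross : ∫ x, g x * Δ x ∂Pθ = ∫ x, g x * g x ∂Pθ := by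
    have h1 : Pθ[fun x => g x * Δ x|MeasurableSpace.comap S mY]
        =ᵐ[Pθ] fun x => g x * (Pθ[Δ|MeasurableSpace.comap S mY]) x := by
      have := condExp_mul_of_stronglyMeasurable_left (μ := Pθ) (m := MeasurableSpace.comap S mY)
        (hgmeas.stronglyMeasurable) (f := g) (g := Δ) (by exact hgΔ) hΔint
      filter_upwards [this] with x hx using hx
    have h2 : Pθ[fun x => g x * Δ x|MeasurableSpace.comap S mY] =ᵐ[Pθ] fun x => g x * g x := by
      filter_upwards [h1, hcond] with x hx1 hx2
      rw [hx1, ← hx2]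
    calc ∫ x, g x * Δ x ∂Pθ
        = ∫ x, (Pθ[fun x => g x * Δ x|MeasurableSpace.comap S mY]) x ∂Pθ :=
          (integral_condExp hm).symm
      _ = ∫ x, g x * g x ∂Pθ := integral_congr_ae h2
  -- Pythagoras
  have hsq : Integrable (fun x => (Δ x)^2) Pθ := hΔ.integrable_sq
  have hgsq : Integrable (fun x => (g x)^2) Pθ := hg2.integrable_sq
  have hdsq : Integrable (fun x => (Δ x - g x)^2) Pθ := (hΔ.sub hg2).integrable_sq
  have hpyth : ∫ x, (Δ x)^2 ∂Pθ = ∫ x, (g x)^2 ∂Pθ + ∫ x, (Δ x - g x)^2 ∂Pθ := by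
    have hI1 : Integrable (fun x => (g x)^2 + (Δ x - g x)^2) Pθ := hgsq.add hdsq
    have hI2 : Integrable (fun x => 2 * (g x * Δ x - g x * g x)) Pθ :=
      (hgΔ.sub hgg).const_mul 2
    have step1 : ∫ x, (Δ x)^2 ∂Pθ
        = ∫ x, ((g x)^2 + (Δ x - g x)^2 + 2 * (g x * Δ x - g x * g x)) ∂Pθ :=
      integral_congr_ae (Filter.Eventually.of_forall fun x => by ring)
    rw [step1, integral_add hI1 hI2, integral_add hgsq hdsq, integral_const_mul,
      integral_sub hgΔ hgg, hcross, sub_self, mul_zero, add_zero]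
  have hdsq_nonneg : 0 ≤ ∫ x, (Δ x - g x)^2 ∂Pθ :=
    integral_nonneg fun x => sq_nonneg _
  refine ⟨by rw [hmap]; exact hpyth, ?_, ?_⟩
  · rw [hmap, hpyth]; linarith
  · rw [hmap]
    constructor
    · intro heq
      have hzero : ∫ x, (Δ x - g x)^2 ∂Pθ = 0 := by linarith [hpyth, heq]
      have hae := (integral_eq_zero_iff_of_nonneg
        (fun x => sq_nonneg (Δ x - g x)) hdsq).mp hzero
      filter_upwards [hae] with x hx
      have h0 : (Δ x - g x)^2 = 0 := hx
      have := pow_eq_zero_iff (n := 2) (by norm_num) |>.mp h0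
      simpa [sub_eq_zero] using this
    · intro heq
      have hzero : (fun x => (Δ x - g x)^2) =ᵐ[Pθ] (fun _ => 0) := by
        filter_upwards [heq] with x hx
        rw [hg_def] at hx
        simp [hg_def, hx]
      rw [hpyth, integral_congr_ae hzero, integral_zero, add_zero]
end

section
/- Let (𝒳,𝒜) and (𝒴,ℬ) be measurable spaces, S : 𝒳 → 𝒴 measurable, and let P and P′ be finite measures on (𝒳,𝒜). Then the total mass of the singular part of the pushforward S P′ with respect to S P is at most the total mass of the singular part of P′ with respect to P: ‖(S P′)_sing w.r.t. S P‖ ≤ ‖P′_sing w.r.t. P‖, where the singular parts are taken from the respective Lebesgue decompositions. -/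
open MeasureTheory Set

/-- for measurable `S : 𝒳 → 𝒴` and finite measures `P`, `P′` on `𝒳`, the
total mass of the singular part of the pushforward `S P′` with respect to `S P` is at
most the total mass of the singular part of `P′` with respect to `P`. -/
theorem stmt12 {X Y : Type*} [MeasurableSpace X] [MeasurableSpace Y]
    (S : X → Y) (hS : Measurable S)
    (P P' : Measure X) [IsFiniteMeasure P] [IsFiniteMeasure P'] :
    (P'.map S).singularPart (P.map S) Set.univ ≤ P'.singularPart P Set.univ := by
  have hdec : P' = P.withDensity (P'.rnDeriv P) + P'.singularPart P :=
    (Measure.rnDeriv_add_singularPart P' P).symm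
  have hmap : P'.map S = (P.withDensity (P'.rnDeriv P)).map S
      + (P'.singularPart P).map S := by
    conv_lhs => rw [hdec]
    exact Measure.map_add _ _ hS
  have hac : (P.withDensity (P'.rnDeriv P)).map S ≪ P.map S :=
    ((withDensity_absolutelyContinuous P _).map hS).trans (le_refl _).absolutelyContinuous
  rw [hmap]
  have h1 : ((P.withDensity (P'.rnDeriv P)).map S
      + (P'.singularPart P).map S).singularPart (P.map S)
      = ((P'.singularPart P).map S).singularPart (P.map S) := by
    rw [Measure.singularPart_add, Measure.singularPart_eq_zero_of_ac hac, zero_add]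
  rw [h1]
  calc ((P'.singularPart P).map S).singularPart (P.map S) Set.univ
      ≤ (P'.singularPart P).map S Set.univ :=
        Measure.singularPart_le _ _ Set.univ
    _ = P'.singularPart P Set.univ := by
        rw [Measure.map_apply hS MeasurableSet.univ, Set.preimage_univ]
end
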